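/- For the r-regular ring network on n vertices with r even and 2 ≤ r < n, the second smallest Laplacian eigenvalue is λ_1 = r + 1 - sin((r+1)π/n)/sin(π/n), i.e., among λ_k = r + 1 - sin((r+1)πk/n)/sin(πk/n) for k = 1, ..., n-1, the value at k = 1 is minimal. -/

import Mathlib

open Real Set

-- Lemma B: the key derivative inequality
lemma ring_aux_lemB (s : ℕ) (hs : 2 ≤ s) {x : ℝ} (hx0 : 0 ≤ x) (hx : x ≤ π / s) :
    (s : ℝ) * (Real.cos (s * x) * Real.sin x) ≤ Real.sin (s * x) * Real.cos x := by
  have hs0 : (0:ℝ) < s := by positivity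
  set φ : ℝ → ℝ := fun y => Real.sin (s * y) * Real.cos y - s * (Real.cos (s * y) * Real.sin y)
    with hφ
  have hder : ∀ y : ℝ, HasDerivAt φ (((s:ℝ)^2 - 1) * (Real.sin (s*y) * Real.sin y)) y := by
    intro y
    have h1 : HasDerivAt (fun y : ℝ => Real.sin ((s:ℝ) * y)) (Real.cos ((s:ℝ)*y) * ((s:ℝ)*1)) y :=
      (Real.hasDerivAt_sin ((s:ℝ)*y)).comp y ((hasDerivAt_id y).const_mul (s:ℝ))
    have h2 : HasDerivAt (fun y : ℝ => Real.cos ((s:ℝ) * y)) (-Real.sin ((s:ℝ)*y) * ((s:ℝ)*1)) y :=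
      (Real.hasDerivAt_cos ((s:ℝ)*y)).comp y ((hasDerivAt_id y).const_mul (s:ℝ))
    have h3 := (h1.mul (Real.hasDerivAt_cos y)).sub
      (((h2.mul (Real.hasDerivAt_sin y))).const_mul (s:ℝ))
    exact h3.congr_deriv (by ring)
  have hmono : MonotoneOn φ (Icc 0 (π / s)) := by
    apply monotoneOn_of_deriv_nonneg (convex_Icc _ _)
    · exact (Continuous.continuousOn (by fun_prop))
    · intro y hy
      exact ((hder y).differentiableAt).differentiableWithinAt
    · intro y hy
      rw [interior_Icc] at hy
      rw [(hder y).deriv]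
      have hs2 : (2:ℝ) ≤ (s:ℝ) := by exact_mod_cast hs
      have hy1 : 0 ≤ Real.sin ((s:ℝ)*y) := by
        apply Real.sin_nonneg_of_nonneg_of_le_pi
        · exact mul_nonneg hs0.le hy.1.le
        · calc (s:ℝ)*y ≤ (s:ℝ) * (π/s) := by nlinarith [hy.2, hy.1]
            _ = π := by field_simp
      have hy2 : 0 ≤ Real.sin y := by
        apply Real.sin_nonneg_of_nonneg_of_le_pi hy.1.le
        have : π / s ≤ π := by
          rw [div_le_iff₀ hs0]; nlinarith [Real.pi_pos]
        linarith [hy.2]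
      have h1s : (1:ℝ) ≤ (s:ℝ)^2 := by nlinarith
      nlinarith [mul_nonneg hy1 hy2]
  have h0 : φ 0 ≤ φ x := hmono ⟨le_refl 0, by positivity⟩ ⟨hx0, hx⟩ hx0
  simp [hφ] at h0
  linarith

-- Lemma A: antitonicity of sin(sx)/sin(x) on (0, π/s]
lemma ring_aux_lemA (s : ℕ) (hs : 2 ≤ s) :
    AntitoneOn (fun x => Real.sin (s * x) / Real.sin x) (Ioc 0 (π / s)) := by
  have hs0 : (0:ℝ) < s := by positivity
  have hπs : π / s ≤ π / 2 := by
    apply div_le_div_of_nonneg_left Real.pi_pos.le two_pos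
    exact_mod_cast hs
  have hne : ∀ x ∈ Ioc (0:ℝ) (π / s), Real.sin x ≠ 0 := by
    intro x hx
    have : 0 < Real.sin x := Real.sin_pos_of_pos_of_lt_pi hx.1
      (lt_of_le_of_lt (hx.2.trans hπs) (by linarith [Real.pi_pos]))
    exact this.ne'
  apply antitoneOn_of_deriv_nonpos (convex_Ioc _ _)
  · exact ContinuousOn.div (by fun_prop) (by fun_prop) hne
  · intro x hx
    rw [interior_Ioc] at hx
    have hsx : Real.sin x ≠ 0 := hne x ⟨hx.1, hx.2.le⟩
    have h1 : HasDerivAt (fun y : ℝ => Real.sin ((s:ℝ) * y)) (Real.cos ((s:ℝ)*x) * ((s:ℝ)*1)) x :=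
      (Real.hasDerivAt_sin ((s:ℝ)*x)).comp x ((hasDerivAt_id x).const_mul (s:ℝ))
    exact ((h1.div (Real.hasDerivAt_sin x) hsx)).differentiableAt.differentiableWithinAt
  · intro x hx
    rw [interior_Ioc] at hx
    have hsx : Real.sin x ≠ 0 := hne x ⟨hx.1, hx.2.le⟩
    have h1 : HasDerivAt (fun y : ℝ => Real.sin ((s:ℝ) * y)) (Real.cos ((s:ℝ)*x) * ((s:ℝ)*1)) x :=
      (Real.hasDerivAt_sin ((s:ℝ)*x)).comp x ((hasDerivAt_id x).const_mul (s:ℝ))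
    rw [(show HasDerivAt (fun y => Real.sin ((s:ℝ) * y) / Real.sin y) _ x from h1.div (Real.hasDerivAt_sin x) hsx).deriv]
    apply div_nonpos_of_nonpos_of_nonneg _ (by positivity)
    have := ring_aux_lemB s hs hx.1.le hx.2.le
    nlinarith

-- helper: bound via 1/sin X
lemma ring_aux_helper (t : ℕ) (x0 X S : ℝ) (ht : 2 ≤ t) (hx0 : 0 < x0)
    (htx0 : (t:ℝ) * x0 ≤ π / 2) (hX1 : π / t ≤ X) (hX2 : X ≤ π / 2) (hS : S ≤ 1) :
    S / Real.sin X ≤ Real.sin (t * x0) / Real.sin x0 := by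
  have ht2 : (2:ℝ) ≤ (t:ℝ) := by exact_mod_cast ht
  have ht0 : (0:ℝ) < t := by linarith
  have hπ := Real.pi_pos
  have hπt0 : 0 < π / t := by positivity
  have hπt2 : π / t ≤ π / 2 := by
    apply div_le_div_of_nonneg_left hπ.le two_pos ht2
  -- sin X ≥ 2/t
  have h1 : Real.sin (π / t) ≤ Real.sin X :=
    Real.sin_le_sin_of_le_of_le_pi_div_two (by linarith) hX2 hX1
  have h2 : 2 / π * (π / t) ≤ Real.sin (π / t) := Real.mul_le_sin hπt0.le hπt2
  have h3 : 2 / π * (π / t) = 2 / t := by field_simp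
  have hsinX : 2 / (t:ℝ) ≤ Real.sin X := by rw [h3] at h2; linarith
  have hsinXpos : 0 < Real.sin X := lt_of_lt_of_le (by positivity) hsinX
  -- LHS ≤ t/2
  have hL1 : S / Real.sin X ≤ 1 / Real.sin X := by gcongr
  have hL2 : 1 / Real.sin X ≤ (t:ℝ) / 2 := by
    have h5 := mul_le_mul_of_nonneg_left hsinX ht0.le
    rw [mul_comm ((t:ℝ)) (2 / (t:ℝ)), div_mul_cancel₀ _ ht0.ne'] at h5
    rw [div_le_div_iff₀ hsinXpos two_pos]
    nlinarith
  -- RHS ≥ 2t/π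
  have hx0le : x0 ≤ π / 2 := by nlinarith
  have hsinx0pos : 0 < Real.sin x0 :=
    Real.sin_pos_of_pos_of_lt_pi hx0 (by linarith)
  have hR1 : 2 / π * ((t:ℝ) * x0) ≤ Real.sin ((t:ℝ) * x0) :=
    Real.mul_le_sin (by positivity) htx0
  have hR2 : Real.sin x0 ≤ x0 := Real.sin_le hx0.le
  have hR3 : 2 / π * (t:ℝ) ≤ Real.sin ((t:ℝ) * x0) / Real.sin x0 := by
    rw [le_div_iff₀ hsinx0pos]
    calc 2 / π * (t:ℝ) * Real.sin x0 ≤ 2 / π * (t:ℝ) * x0 := by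
          have : (0:ℝ) ≤ 2 / π * t := by positivity
          nlinarith
      _ = 2 / π * ((t:ℝ) * x0) := by ring
      _ ≤ Real.sin ((t:ℝ) * x0) := hR1
  have hπ4 : π ≤ 4 := by linarith [Real.pi_le_four]
  have h7 : (1:ℝ) / 2 ≤ 2 / π := by
    rw [div_le_div_iff₀ two_pos hπ]; linarith
  have : (t:ℝ) / 2 ≤ 2 / π * (t:ℝ) := by
    calc (t:ℝ) / 2 = 1 / 2 * t := by ring
      _ ≤ 2 / π * t := by gcongr
  linarith

set_option maxHeartbeats 1000000 in
lemma ring_aux_core (m n k : ℕ) (hm : 3 ≤ m) (hmn : m ≤ n) (hk : 1 ≤ k) (hkn : 2 * k ≤ n) :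
    Real.sin (m * (k * (π / n))) / Real.sin (k * (π / n))
      ≤ Real.sin (m * (π / n)) / Real.sin (π / n) := by
  have hπ := Real.pi_pos
  have hn0 : (0:ℝ) < n := by exact_mod_cast (by omega : 0 < n)
  have hn2 : (2:ℝ) ≤ n := by exact_mod_cast (by omega : 2 ≤ n)
  have hm3 : (3:ℝ) ≤ m := by exact_mod_cast hm
  have hmnR : (m:ℝ) ≤ n := by exact_mod_cast hmn
  have hk1 : (1:ℝ) ≤ k := by exact_mod_cast hk
  have hknR : 2 * (k:ℝ) ≤ n := by exact_mod_cast hkn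
  set x0 : ℝ := π / n with hx0def
  set X : ℝ := (k:ℝ) * x0 with hXdef
  have hx0 : 0 < x0 := by positivity
  have hx0X : x0 ≤ X := by nlinarith
  have hX2 : X ≤ π / 2 := by
    rw [hXdef, hx0def, ← mul_div_assoc, div_le_div_iff₀ hn0 two_pos]
    nlinarith
  have hXpos : 0 < X := lt_of_lt_of_le hx0 hx0X
  have hsinX : 0 < Real.sin X := Real.sin_pos_of_pos_of_lt_pi hXpos (by linarith)
  have hsinx0 : 0 < Real.sin x0 := Real.sin_pos_of_pos_of_lt_pi hx0 (by nlinarith)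
  by_cases hmn' : m = n
  · subst hmn'
    have e1 : (m:ℝ) * X = k * π := by rw [hXdef, hx0def]; field_simp
    have e2 : (m:ℝ) * x0 = π := by rw [hx0def]; field_simp
    rw [e1, e2, Real.sin_pi]
    have : Real.sin ((k:ℝ) * π) = 0 := by
      exact_mod_cast Real.sin_nat_mul_pi k
    rw [this]
    simp
  have hmlt : m < n := lt_of_le_of_ne hmn hmn'
  by_cases hc1 : X ≤ π / m
  · -- monotone case
    have hx0m : x0 ≤ π / m := by
      rw [hx0def]
      apply div_le_div_of_nonneg_left hπ.le (by positivity) hmnR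
    exact ring_aux_lemA m (by omega) ⟨hx0, hx0m⟩ ⟨hXpos, hc1⟩ hx0X
  push_neg at hc1
  by_cases hc2 : (m:ℝ) * x0 ≤ π / 2
  · exact ring_aux_helper m x0 X (Real.sin ((m:ℝ) * X)) (by omega) hx0 hc2 hc1.le hX2
      (Real.sin_le_one _)
  push_neg at hc2
  -- reflection case: n < 2m
  have hn2m : (n:ℝ) < 2 * m := by
    have h := mul_lt_mul_of_pos_right hc2 hn0
    have e : (m:ℝ) * x0 * n = m * π := by rw [hx0def]; field_simp
    rw [e] at h
    nlinarith
  set s : ℕ := n - m with hsdef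
  have hs1 : 1 ≤ s := by omega
  have hsR : (s:ℝ) = (n:ℝ) - m := by
    rw [hsdef]; push_cast [Nat.cast_sub hmn]; ring
  have h2s : 2 * (s:ℝ) < n := by rw [hsR]; linarith
  have hmltR : (m:ℝ) < n := by exact_mod_cast hmlt
  have hs0R : (0:ℝ) < s := by rw [hsR]; linarith
  have hsx0 : (s:ℝ) * x0 ≤ π / 2 := by
    rw [hx0def, ← mul_div_assoc, div_le_div_iff₀ hn0 two_pos]
    nlinarith
  have hsinsx0 : 0 ≤ Real.sin ((s:ℝ) * x0) :=
    Real.sin_nonneg_of_nonneg_of_le_pi (mul_nonneg hs0R.le hx0.le) (by linarith)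
  -- identities
  have hidX : (m:ℝ) * X = (k:ℝ) * π - (s:ℝ) * X := by
    rw [hsR, hXdef, hx0def]; field_simp; ring
  have hidx0 : (m:ℝ) * x0 = π - (s:ℝ) * x0 := by
    rw [hsR, hx0def]; field_simp; ring
  have hsinmX : Real.sin ((m:ℝ) * X) = -((-1) ^ k * Real.sin ((s:ℝ) * X)) := by
    rw [hidX]
    exact_mod_cast Real.sin_nat_mul_pi_sub ((s:ℝ) * X) k
  have hsinmx0 : Real.sin ((m:ℝ) * x0) = Real.sin ((s:ℝ) * x0) := by
    rw [hidx0, Real.sin_pi_sub]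
  rw [hsinmX, hsinmx0]
  by_cases hs2 : 2 ≤ s
  · by_cases hc3 : X ≤ π / s
    · have hsinsX : 0 ≤ Real.sin ((s:ℝ) * X) := by
        apply Real.sin_nonneg_of_nonneg_of_le_pi (mul_nonneg hs0R.le hXpos.le)
        calc (s:ℝ) * X ≤ (s:ℝ) * (π / s) := mul_le_mul_of_nonneg_left hc3 hs0R.le
          _ = π := by field_simp
      rcases Nat.even_or_odd k with hke | hko
      · rw [hke.neg_one_pow]
        apply le_trans (b := 0)
        · apply div_nonpos_of_nonpos_of_nonneg _ hsinX.le
          rw [one_mul]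
          linarith
        · exact div_nonneg hsinsx0 hsinx0.le
      · rw [hko.neg_one_pow]
        simp only [neg_mul, one_mul, neg_neg]
        have hx0s : x0 ≤ π / s := by
          rw [hx0def]
          apply div_le_div_of_nonneg_left hπ.le hs0R
          rw [hsR]; linarith
        exact ring_aux_lemA s hs2 ⟨hx0, hx0s⟩ ⟨hXpos, hc3⟩ hx0X
    · push_neg at hc3
      apply ring_aux_helper s x0 X _ hs2 hx0 hsx0 hc3.le hX2
      calc -((-1:ℝ) ^ k * Real.sin ((s:ℝ) * X)) ≤ |(-1:ℝ) ^ k * Real.sin ((s:ℝ) * X)| :=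
            neg_le_abs _
        _ = |Real.sin ((s:ℝ) * X)| := by
            rw [abs_mul, abs_pow, abs_neg, abs_one, one_pow, one_mul]
        _ ≤ 1 := Real.abs_sin_le_one _
  · -- s = 1
    have hs1' : s = 1 := by omega
    rw [hs1']
    push_cast
    rw [one_mul, one_mul]
    rw [div_self hsinx0.ne']
    rw [div_le_one hsinX]
    rcases Nat.even_or_odd k with hke | hko
    · rw [hke.neg_one_pow]; simp; linarith
    · rw [hko.neg_one_pow]; simp

/-- For the `r`-regular ring network on `n` vertices (`r` even, `2 ≤ r < n`), among the
nonzero Laplacian eigenvalues `λ_k = r + 1 - sin((r+1)πk/n)/sin(πk/n)`, `k = 1, …, n-1`,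
the value at `k = 1` is minimal; i.e. `λ_1` is the second smallest Laplacian eigenvalue. -/
theorem ring_network_second_smallest_eigenvalue (n r : ℕ)
    (hre : Even r) (hr : 2 ≤ r) (hrn : r < n) :
    ∀ k : ℕ, 1 ≤ k → k ≤ n - 1 →
      (r : ℝ) + 1 - Real.sin (((r : ℝ) + 1) * Real.pi / n) / Real.sin (Real.pi / n)
        ≤ (r : ℝ) + 1 - Real.sin (((r : ℝ) + 1) * Real.pi * k / n) / Real.sin (Real.pi * k / n) := by
  intro k hk1 hkn
  have hπ := Real.pi_pos
  have hn0 : (0:ℝ) < n := by exact_mod_cast (by omega : 0 < n)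
  have hm3 : 3 ≤ r + 1 := by omega
  have hmn : r + 1 ≤ n := by omega
  have e0 : ((r:ℝ) + 1) = ((r + 1 : ℕ) : ℝ) := by push_cast; ring
  have e1 : ((r:ℝ) + 1) * π / n = ((r + 1 : ℕ) : ℝ) * (π / n) := by rw [e0]; ring
  have e3 : ((r:ℝ) + 1) * π * k / n = ((r + 1 : ℕ) : ℝ) * ((k:ℝ) * (π / n)) := by
    rw [e0]; ring
  have e4 : π * (k:ℝ) / n = (k:ℝ) * (π / n) := by ring
  apply sub_le_sub_left
  rw [e1, e3, e4]
  by_cases hk2 : 2 * k ≤ n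
  · exact ring_aux_core (r + 1) n k hm3 hmn hk1 hk2
  · push_neg at hk2
    set k' := n - k with hk'def
    have hk'1 : 1 ≤ k' := by omega
    have hk'2 : 2 * k' ≤ n := by omega
    have hsum : (k':ℝ) + (k:ℝ) = (n:ℝ) := by exact_mod_cast (by omega : k' + k = n)
    have hcast : (k:ℝ) = (n:ℝ) - k' := by linarith
    have core' := ring_aux_core (r + 1) n k' hm3 hmn hk'1 hk'2
    have d1 : (k:ℝ) * (π / n) = π - (k':ℝ) * (π / n) := by
      rw [hcast]; field_simp
    have d2 : ((r + 1 : ℕ) : ℝ) * ((k:ℝ) * (π / n))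
        = ((r + 1 : ℕ) : ℝ) * π - ((r + 1 : ℕ) : ℝ) * ((k':ℝ) * (π / n)) := by
      rw [d1]; ring
    rw [d2, d1, Real.sin_pi_sub]
    have d3 : Real.sin (((r + 1 : ℕ) : ℝ) * π - ((r + 1 : ℕ) : ℝ) * ((k':ℝ) * (π / n)))
        = Real.sin (((r + 1 : ℕ) : ℝ) * ((k':ℝ) * (π / n))) := by
      rw [Real.sin_nat_mul_pi_sub]
      have hodd : Odd (r + 1) := Even.add_one hre
      rw [hodd.neg_one_pow]; ring
    rw [d3]
    exact core'
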